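/- Explicit example: Let k = F₂, V = F₂⁴, and G ≅ (Z/2Z)³ the abelian transvection group generated by the three 4×4 matrices σ₁ = I + E₃₁, σ₂ = I + E₄₂, σ₃ = I + E₃₁ + E₃₂ + E₄₁ + E₄₂ (with E_{ij} elementary matrices). Then σ₁, σ₂, σ₃ are the only transvections in G, with transvection hyperplanes defined by x₁, x₂ and x₁ + x₂ respectively, and the Dedekind different is θ = x₁x₂(x₁+x₂). -/

import Mathlib

open MvPolynomial

set_option synthInstance.maxHeartbeats 1000000
set_option maxHeartbeats 1000000

variable {k : Type*} [Field k] {ι : Type*} [Fintype ι] [DecidableEq ι]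

noncomputable def galAct (M : Matrix.GeneralLinearGroup ι k) :
    MvPolynomial ι k →ₐ[k] MvPolynomial ι k :=
  aeval fun i => ∑ j, (((M⁻¹ : Matrix.GeneralLinearGroup ι k) : Matrix ι ι k) i j) • X j

def invariants (G : Subgroup (Matrix.GeneralLinearGroup ι k)) :
    Subalgebra k (MvPolynomial ι k) where
  carrier := {p | ∀ σ ∈ G, galAct σ p = p}
  mul_mem' := fun ha hb σ hσ => by rw [map_mul, ha σ hσ, hb σ hσ]
  add_mem' := fun ha hb σ hσ => by rw [map_add, ha σ hσ, hb σ hσ]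
  algebraMap_mem' := fun r σ hσ => by simp [galAct]

noncomputable def fixedSpace (M : Matrix.GeneralLinearGroup ι k) : Submodule k (ι → k) :=
  LinearMap.ker (Matrix.mulVecLin ((M : Matrix ι ι k) - 1))

noncomputable def moveSpace (M : Matrix.GeneralLinearGroup ι k) : Submodule k (ι → k) :=
  LinearMap.range (Matrix.mulVecLin ((M : Matrix ι ι k) - 1))

def IsPseudoReflection (M : Matrix.GeneralLinearGroup ι k) : Prop :=
  Module.finrank k (moveSpace M) = 1

def IsTransvection (M : Matrix.GeneralLinearGroup ι k) : Prop :=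
  IsPseudoReflection M ∧ moveSpace M ≤ fixedSpace M

noncomputable def linForm (y : Module.Dual k (ι → k)) : MvPolynomial ι k :=
  ∑ i, C (y (Pi.single i 1)) * X i

noncomputable def hilbertIdeal (G : Subgroup (Matrix.GeneralLinearGroup ι k)) :
    Ideal (MvPolynomial ι k) :=
  Ideal.span {p | p ∈ invariants G ∧ ∃ d, 0 < d ∧ p.IsHomogeneous d}

def DSP (G : Subgroup (Matrix.GeneralLinearGroup ι k)) : Prop :=
  ∃ π : MvPolynomial ι k →ₗ[↥(invariants G)] ↥(invariants G),
    Function.Surjective π ∧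
    ∀ (p : MvPolynomial ι k) (d : ℕ), p.IsHomogeneous d →
      ((π p : MvPolynomial ι k)).IsHomogeneous d

noncomputable def fixedSubmodule (G : Subgroup (Matrix.GeneralLinearGroup ι k)) :
    Submodule k (ι → k) := ⨅ σ ∈ G, fixedSpace σ

/-- `σ₁ = I + E₃₁` over `F₂`. -/
def M1 : Matrix (Fin 4) (Fin 4) (ZMod 2) := !![1,0,0,0; 0,1,0,0; 1,0,1,0; 0,0,0,1]
/-- `σ₂ = I + E₄₂` over `F₂`. -/
def M2 : Matrix (Fin 4) (Fin 4) (ZMod 2) := !![1,0,0,0; 0,1,0,0; 0,0,1,0; 0,1,0,1]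
/-- `σ₃ = I + E₃₁ + E₃₂ + E₄₁ + E₄₂` over `F₂`. -/
def M3 : Matrix (Fin 4) (Fin 4) (ZMod 2) := !![1,0,0,0; 0,1,0,0; 1,1,1,0; 1,1,0,1]

def s1 : Matrix.GeneralLinearGroup (Fin 4) (ZMod 2) := ⟨M1, M1, by decide, by decide⟩
def s2 : Matrix.GeneralLinearGroup (Fin 4) (ZMod 2) := ⟨M2, M2, by decide, by decide⟩
def s3 : Matrix.GeneralLinearGroup (Fin 4) (ZMod 2) := ⟨M3, M3, by decide, by decide⟩


section Aux

abbrev GL42 := Matrix.GeneralLinearGroup (Fin 4) (ZMod 2)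

instance : DecidableEq GL42 := fun _ _ => decidable_of_iff _ Units.ext_iff.symm

instance instDecMove (g : GL42) : DecidablePred (· ∈ moveSpace g) :=
  fun x => decidable_of_iff
    (∃ y, Matrix.mulVecLin ((g : Matrix (Fin 4) (Fin 4) (ZMod 2)) - 1) y = x)
    (LinearMap.mem_range).symm

instance instDecFix (g : GL42) : DecidablePred (· ∈ fixedSpace g) :=
  fun x => decidable_of_iff
    (Matrix.mulVecLin ((g : Matrix (Fin 4) (Fin 4) (ZMod 2)) - 1) x = 0)
    (LinearMap.mem_ker).symm

lemma card_move (g : GL42) :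
    Fintype.card ↥(moveSpace g) = 2 ^ Module.finrank (ZMod 2) ↥(moveSpace g) := by
  have h := Module.card_eq_pow_finrank (K := ZMod 2) (V := ↥(moveSpace g))
  rwa [ZMod.card] at h

lemma pr_of_card (g : GL42) (h : Fintype.card ↥(moveSpace g) = 2) :
    IsPseudoReflection g := by
  have h2 : 2 ^ 1 = 2 ^ Module.finrank (ZMod 2) ↥(moveSpace g) := by
    rw [pow_one]
    exact h.symm.trans (card_move g)
  exact (Nat.pow_right_injective (le_refl 2) h2).symm

lemma not_pr_of_card (g : GL42) (h : Fintype.card ↥(moveSpace g) ≠ 2) :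
    ¬ IsPseudoReflection g := fun hr => h (by rw [card_move g, hr, pow_one])

lemma zmod2_dual_eq (f g : Module.Dual (ZMod 2) (Fin 4 → ZMod 2))
    (h : LinearMap.ker f = LinearMap.ker g) : f = g := by
  apply LinearMap.ext
  intro v
  have h1 : f v = 0 ↔ g v = 0 := by
    rw [← LinearMap.mem_ker, ← LinearMap.mem_ker, h]
  exact (by decide : ∀ a b : ZMod 2, (a = 0 ↔ b = 0) → a = b) (f v) (g v) h1

end Aux

section TheGroup

def HH : Subgroup GL42 where
  carrier := {g | g = 1 ∨ g = s1 ∨ g = s2 ∨ g = s3 ∨ g = s1*s2 ∨ g = s1*s3 ∨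
    g = s2*s3 ∨ g = s1*s2*s3}
  one_mem' := Or.inl rfl
  mul_mem' := by
    rintro a b (rfl|rfl|rfl|rfl|rfl|rfl|rfl|rfl) (rfl|rfl|rfl|rfl|rfl|rfl|rfl|rfl) <;> decide
  inv_mem' := by
    rintro a (rfl|rfl|rfl|rfl|rfl|rfl|rfl|rfl) <;> decide

lemma closure_le_HH : Subgroup.closure {s1, s2, s3} ≤ HH := by
  rw [Subgroup.closure_le]
  rintro a (rfl|rfl|rfl)
  · exact Or.inr (Or.inl rfl)
  · exact Or.inr (Or.inr (Or.inl rfl))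
  · exact Or.inr (Or.inr (Or.inr (Or.inl rfl)))

lemma trans_s1 : IsTransvection s1 :=
  ⟨pr_of_card s1 (by decide), by rw [SetLike.le_def]; decide⟩
lemma trans_s2 : IsTransvection s2 :=
  ⟨pr_of_card s2 (by decide), by rw [SetLike.le_def]; decide⟩
lemma trans_s3 : IsTransvection s3 :=
  ⟨pr_of_card s3 (by decide), by rw [SetLike.le_def]; decide⟩

end TheGroup

/-- For `G = ⟨σ₁, σ₂, σ₃⟩ ≅ (ℤ/2ℤ)³` acting on `V = F₂⁴` as above:
`σ₁`, `σ₂`, `σ₃` are the only transvections in `G`; their transvection hyperplanes are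
defined by the linear forms `x₁`, `x₂` and `x₁ + x₂` respectively; and the Dedekind
different (the product of the linear forms defining the reflecting hyperplanes, each with
multiplicity one) is `θ = x₁·x₂·(x₁ + x₂)`. -/
theorem statement18 (G : Subgroup (Matrix.GeneralLinearGroup (Fin 4) (ZMod 2)))
    (hG : G = Subgroup.closure {s1, s2, s3}) :
    (∀ σ ∈ G, IsTransvection σ ↔ σ = s1 ∨ σ = s2 ∨ σ = s3) ∧
    fixedSpace s1 =
      LinearMap.ker (LinearMap.proj 0 : (Fin 4 → ZMod 2) →ₗ[ZMod 2] ZMod 2) ∧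
    fixedSpace s2 =
      LinearMap.ker (LinearMap.proj 1 : (Fin 4 → ZMod 2) →ₗ[ZMod 2] ZMod 2) ∧
    fixedSpace s3 =
      LinearMap.ker ((LinearMap.proj 0 : (Fin 4 → ZMod 2) →ₗ[ZMod 2] ZMod 2) +
        (LinearMap.proj 1 : (Fin 4 → ZMod 2) →ₗ[ZMod 2] ZMod 2)) ∧
    ∀ x₁ x₂ x₃ : Module.Dual (ZMod 2) (Fin 4 → ZMod 2),
      LinearMap.ker x₁ = fixedSpace s1 → LinearMap.ker x₂ = fixedSpace s2 →
      LinearMap.ker x₃ = fixedSpace s3 →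
      linForm x₁ * linForm x₂ * linForm x₃ =
        X 0 * X 1 * (X 0 + X 1) := by
  subst hG
  have hfix1 : fixedSpace s1 =
      LinearMap.ker (LinearMap.proj 0 : (Fin 4 → ZMod 2) →ₗ[ZMod 2] ZMod 2) := by
    ext v
    simp only [LinearMap.mem_ker]
    constructor
    · revert v; decide
    · revert v; decide
  have hfix2 : fixedSpace s2 =
      LinearMap.ker (LinearMap.proj 1 : (Fin 4 → ZMod 2) →ₗ[ZMod 2] ZMod 2) := by
    ext v
    simp only [LinearMap.mem_ker]
    constructor
    · revert v; decide
    · revert v; decide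
  have hfix3 : fixedSpace s3 =
      LinearMap.ker ((LinearMap.proj 0 : (Fin 4 → ZMod 2) →ₗ[ZMod 2] ZMod 2) +
        (LinearMap.proj 1 : (Fin 4 → ZMod 2) →ₗ[ZMod 2] ZMod 2)) := by
    ext v
    simp only [LinearMap.mem_ker]
    constructor
    · revert v; decide
    · revert v; decide
  refine ⟨?_, hfix1, hfix2, hfix3, ?_⟩
  · intro g hg
    have hmem := closure_le_HH hg
    constructor
    · intro htr
      rcases hmem with rfl|rfl|rfl|rfl|rfl|rfl|rfl|rfl
      · exact absurd htr.1 (not_pr_of_card 1 (by decide))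
      · exact Or.inl rfl
      · exact Or.inr (Or.inl rfl)
      · exact Or.inr (Or.inr rfl)
      · exact absurd htr.1 (not_pr_of_card _ (by decide))
      · exact absurd htr.1 (not_pr_of_card _ (by decide))
      · exact absurd htr.1 (not_pr_of_card _ (by decide))
      · exact absurd htr.1 (not_pr_of_card _ (by decide))
    · rintro (rfl|rfl|rfl)
      · exact trans_s1
      · exact trans_s2
      · exact trans_s3
  · intro x1 x2 x3 h1 h2 h3
    rw [hfix1] at h1
    rw [hfix2] at h2
    rw [hfix3] at h3
    have e1 := zmod2_dual_eq _ _ h1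
    have e2 := zmod2_dual_eq _ _ h2
    have e3 := zmod2_dual_eq _ _ h3
    subst e1; subst e2; subst e3
    have l1 : linForm (LinearMap.proj 0 : (Fin 4 → ZMod 2) →ₗ[ZMod 2] ZMod 2) = X 0 := by
      simp [linForm, Fin.sum_univ_four, Pi.single_apply]
    have l2 : linForm (LinearMap.proj 1 : (Fin 4 → ZMod 2) →ₗ[ZMod 2] ZMod 2) = X 1 := by
      simp [linForm, Fin.sum_univ_four, Pi.single_apply]
    have l3 : linForm ((LinearMap.proj 0 : (Fin 4 → ZMod 2) →ₗ[ZMod 2] ZMod 2) +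
        (LinearMap.proj 1 : (Fin 4 → ZMod 2) →ₗ[ZMod 2] ZMod 2)) = X 0 + X 1 := by
      simp [linForm, Fin.sum_univ_four, Pi.single_apply]
    rw [l1, l2, l3]
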